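/- arXiv:1811.08197 — 2 statements merged into one kernel-verified Lean document; each statement's English description precedes it below -/
import Mathlib

section
/- Let G be a finite simple graph on vertex set V with |V| ≥ 3. If there exists f : V → V such that (a) for all v, G.Adj v (f v); (b) every v has exactly one f-preimage; and (c) every nonempty subset X ⊆ V closed under f equals V, then G contains a Hamiltonian cycle (a cycle visiting every vertex exactly once). -/
private lemma iter_comm {V : Type*} (f : V → V) (k : ℕ) (v : V) :
    f (f^[k] v) = f^[k] (f v) :=
  (Function.iterate_succ_apply' f k v).symm.trans (Function.iterate_succ_apply f k v)

private def iterWalk {V : Type*} (G : SimpleGraph V) (f : V → V) (ha : ∀ v, G.Adj v (f v))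
    (v : V) : ∀ k : ℕ, G.Walk v (f^[k] v)
  | 0 => SimpleGraph.Walk.nil
  | k + 1 => ((iterWalk G f ha v k).concat (ha _)).copy rfl
      (Function.iterate_succ_apply' f k v).symm

private lemma iterWalk_support {V : Type*} (G : SimpleGraph V) (f : V → V)
    (ha : ∀ v, G.Adj v (f v)) (v : V) (k : ℕ) :
    (iterWalk G f ha v k).support = (List.range (k + 1)).map (fun i => f^[i] v) := by
  induction k with
  | zero => simp [iterWalk]
  | succ k ih =>
    rw [iterWalk, SimpleGraph.Walk.support_copy, SimpleGraph.Walk.support_concat, ih]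
    simp [List.range_succ, iter_comm]

private lemma iterWalk_edges {V : Type*} (G : SimpleGraph V) (f : V → V)
    (ha : ∀ v, G.Adj v (f v)) (v : V) (k : ℕ) :
    (iterWalk G f ha v k).edges =
      (List.range k).map (fun i => s(f^[i] v, f^[i + 1] v)) := by
  induction k with
  | zero => simp [iterWalk]
  | succ k ih =>
    rw [iterWalk, SimpleGraph.Walk.edges_copy, SimpleGraph.Walk.edges_concat, ih]
    simp [List.range_succ, iter_comm]

theorem stmt_13 {V : Type*} [Fintype V] [DecidableEq V] (G : SimpleGraph V)
    (h3 : 3 ≤ Fintype.card V) (f : V → V)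
    (ha : ∀ v, G.Adj v (f v))
    (hb : ∀ v : V, ∃! w : V, f w = v)
    (hc : ∀ X : Set V, X.Nonempty → (∀ v ∈ X, f v ∈ X) → X = Set.univ) :
    ∃ (v : V) (c : G.Walk v v), c.IsHamiltonianCycle := by
  classical
  set n := Fintype.card V with hn
  have hnV : Nonempty V := Fintype.card_pos_iff.mp (by omega)
  obtain ⟨v₀⟩ := hnV
  -- f is injective
  have hf_inj : Function.Injective f := by
    intro a b h
    obtain ⟨w, _, hu⟩ := hb (f a)
    exact (hu a rfl).trans (hu b h.symm).symm
  -- the orbit of v₀ is everything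
  have horb : ∀ x : V, ∃ k : ℕ, f^[k] v₀ = x := by
    intro x
    have h := hc (Set.range (fun k : ℕ => f^[k] v₀)) ⟨v₀, 0, rfl⟩ ?_
    · have : x ∈ Set.range (fun k : ℕ => f^[k] v₀) := h ▸ Set.mem_univ x
      exact this
    · rintro _ ⟨k, rfl⟩
      exact ⟨k + 1, by simp [Function.iterate_succ_apply']⟩
  -- v₀ is a periodic point
  have hper : v₀ ∈ Function.periodicPts f := by
    obtain ⟨i, j, hij, hEq⟩ := Finite.exists_ne_map_eq_of_infinite (fun k : ℕ => f^[k] v₀)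
    rcases hij.lt_or_gt with hlt | hlt
    · refine ⟨j - i, by omega, ?_⟩
      have : f^[i] (f^[j - i] v₀) = f^[i] v₀ := by
        rw [← Function.iterate_add_apply]
        simpa [Nat.add_sub_cancel' hlt.le] using hEq.symm
      exact hf_inj.iterate i this
    · refine ⟨i - j, by omega, ?_⟩
      have : f^[j] (f^[i - j] v₀) = f^[j] v₀ := by
        rw [← Function.iterate_add_apply]
        simpa [Nat.add_sub_cancel' hlt.le] using hEq
      exact hf_inj.iterate j this
  set m := Function.minimalPeriod f v₀ with hm
  have hm_pos : 0 < m := Function.minimalPeriod_pos_of_mem_periodicPts hper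
  -- minimal period equals card
  have him : (Finset.range m).image (fun k => f^[k] v₀) = Finset.univ := by
    apply Finset.eq_univ_of_forall
    intro x
    obtain ⟨k, hk⟩ := horb x
    exact Finset.mem_image.mpr ⟨k % m, Finset.mem_range.mpr (Nat.mod_lt _ hm_pos),
      by rw [Function.iterate_mod_minimalPeriod_eq, hk]⟩
  have hmn : m = n := by
    have h1 : ((Finset.range m).image (fun k => f^[k] v₀)).card = m := by
      rw [Finset.card_image_of_injOn, Finset.card_range]
      intro a haa b hbb hab
      exact Function.iterate_injOn_Iio_minimalPeriod
        (by simpa using Finset.mem_range.mp haa) (by simpa using Finset.mem_range.mp hbb) hab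
    rw [him, Finset.card_univ] at h1
    exact h1.symm
  have hn_pos : 0 < n := by omega
  have hkey : ∀ i j : ℕ, f^[i] v₀ = f^[j] v₀ → i % n = j % n := by
    intro i j h
    rw [← hmn]
    apply Function.iterate_injOn_Iio_minimalPeriod (Nat.mod_lt _ hm_pos) (Nat.mod_lt _ hm_pos)
    simpa [Function.iterate_mod_minimalPeriod_eq] using h
  have hperiod : ∀ k : ℕ, f^[k % n] v₀ = f^[k] v₀ := by
    intro k
    rw [← hmn]
    exact Function.iterate_mod_minimalPeriod_eq
  have hpn : f^[n] v₀ = v₀ := by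
    rw [← hmn]
    exact Function.iterate_minimalPeriod
  -- the walk
  refine ⟨v₀, (iterWalk G f ha v₀ n).copy rfl hpn, ?_⟩
  set c : G.Walk v₀ v₀ := (iterWalk G f ha v₀ n).copy rfl hpn with hcdef
  have hsupp : c.support = (List.range (n + 1)).map (fun i => f^[i] v₀) := by
    rw [hcdef, SimpleGraph.Walk.support_copy, iterWalk_support]
  have hedges : c.edges = (List.range n).map (fun i => s(f^[i] v₀, f^[i + 1] v₀)) := by
    rw [hcdef, SimpleGraph.Walk.edges_copy, iterWalk_edges]
  have htail : c.support.tail = (List.range n).map (fun i => f^[i + 1] v₀) := by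
    rw [hsupp, List.range_succ_eq_map, List.map_cons, List.tail_cons, List.map_map]
    rfl
  have htail_nodup : c.support.tail.Nodup := by
    rw [htail]
    refine List.Nodup.map_on ?_ List.nodup_range
    intro i hi j hj hEq
    have hi' : i < n := List.mem_range.mp hi
    have hj' : j < n := List.mem_range.mp hj
    have h1 : (i + 1) % n = (j + 1) % n := hkey _ _ hEq
    have h2 : i % n = j % n := Nat.ModEq.add_right_cancel' 1 h1
    rwa [Nat.mod_eq_of_lt hi', Nat.mod_eq_of_lt hj'] at h2
  have hedges_nodup : c.edges.Nodup := by
    rw [hedges]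
    refine List.Nodup.map_on ?_ List.nodup_range
    intro i hi j hj hEq
    have hi' : i < n := List.mem_range.mp hi
    have hj' : j < n := List.mem_range.mp hj
    rw [Sym2.eq_iff] at hEq
    rcases hEq with ⟨h1, _⟩ | ⟨h1, h2⟩
    · have := hkey _ _ h1
      rwa [Nat.mod_eq_of_lt hi', Nat.mod_eq_of_lt hj'] at this
    · exfalso
      have e1 : i % n = (j + 1) % n := hkey _ _ h1
      have e2 : (i + 1) % n = j % n := hkey _ _ h2
      have e3 : j % n = (j + 2) % n := by
        calc j % n = (i + 1) % n := e2.symm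
        _ = (j + 1 + 1) % n := by rw [Nat.ModEq.add_right 1 e1]
        _ = (j + 2) % n := by ring_nf
      have : n ∣ j + 2 - j := (Nat.modEq_iff_dvd' (by omega)).mp e3
      simp at this
      have := Nat.le_of_dvd (by norm_num) this
      omega
  have hlen : c.length = n := by
    rw [← SimpleGraph.Walk.length_edges, hedges]
    simp
  have hcycle : c.IsCycle := by
    rw [SimpleGraph.Walk.isCycle_def]
    refine ⟨(SimpleGraph.Walk.isTrail_def _).mpr hedges_nodup, ?_, htail_nodup⟩
    intro h
    rw [h] at hlen
    simp at hlen
    omega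
  rw [SimpleGraph.Walk.isHamiltonianCycle_iff_isCycle_and_support_count_tail_eq_one]
  refine ⟨hcycle, ?_⟩
  intro a
  apply List.count_eq_one_of_mem htail_nodup
  rw [htail]
  obtain ⟨k, hk⟩ := horb a
  refine List.mem_map.mpr ⟨(k + n - 1) % n, List.mem_range.mpr (Nat.mod_lt _ hn_pos), ?_⟩
  have : ((k + n - 1) % n + 1) % n = k % n := by
    have h5 : ((k + n - 1) % n + 1) % n = (k + n - 1 + 1) % n :=
      (Nat.mod_modEq (k + n - 1) n).add_right 1
    have h6 : k + n - 1 + 1 = k + n := by omega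
    rw [h5, h6, Nat.add_mod_right]
  calc f^[(k + n - 1) % n + 1] v₀ = f^[((k + n - 1) % n + 1) % n] v₀ := (hperiod _).symm
    _ = f^[k % n] v₀ := by rw [this]
    _ = f^[k] v₀ := hperiod k
    _ = a := hk
end

section
/- Let G be a finite simple graph on vertex set V with |V| ≥ 3. If G contains a Hamiltonian cycle, then there exists f : V → V such that for all v, G.Adj v (f v), every v has exactly one f-preimage, and every nonempty f-closed subset of V equals V. -/
theorem stmt_14 {V : Type*} [Fintype V] [DecidableEq V] (G : SimpleGraph V)
    (h3 : 3 ≤ Fintype.card V)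
    (hham : ∃ (v : V) (c : G.Walk v v), c.IsHamiltonianCycle) :
    ∃ f : V → V,
      (∀ v, G.Adj v (f v)) ∧
      (∀ v : V, ∃! w : V, f w = v) ∧
      (∀ X : Set V, X.Nonempty → (∀ v ∈ X, f v ∈ X) → X = Set.univ) := by
  classical
  obtain ⟨v, c, hc⟩ := hham
  set l : List V := c.support.tail with hl
  have hnodup : l.Nodup := hc.isCycle.support_nodup
  have hmem : ∀ x : V, x ∈ l := by
    intro x
    have := hc.isHamiltonian_tail.mem_support x
    rwa [SimpleGraph.Walk.support_tail_of_not_nil c hc.isCycle.not_nil] at this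
  have hlen : l.length = Fintype.card V := by
    have : l.toFinset = Finset.univ := by
      ext x; simp [hmem x]
    have h1 : l.toFinset.card = l.length := List.toFinset_card_of_nodup hnodup
    rw [← h1, this, Finset.card_univ]
  have hn2 : 2 ≤ l.length := by omega
  have hs : c.support = v :: l := c.support_eq_cons
  have hne : l ≠ [] := by rw [← List.length_pos_iff_ne_nil]; omega
  have hlast : l.getLast hne = v := by
    have h1 : c.support.getLast (by simp) = v := c.getLast_support
    simp only [hs] at h1
    rwa [List.getLast_cons hne] at h1
  refine ⟨l.formPerm, ?_, ?_, ?_⟩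
  · -- adjacency
    intro x
    have hx : x ∈ l := hmem x
    rw [List.formPerm_apply_mem_eq_next hnodup x hx]
    obtain ⟨i, rfl⟩ := List.get_of_mem hx
    rw [show l.next (l.get i) (List.get_mem _ _) = l.get ⟨((i : ℕ) + 1) % l.length, Nat.mod_lt _ (by omega)⟩ from List.next_getElem l hnodup i i.2]
    have hchain : List.IsChain G.Adj c.support := c.isChain_adj_support
    rw [hs, List.isChain_iff_getElem] at hchain
    by_cases hi : (i : ℕ) + 1 < l.length
    · have h := hchain ((i : ℕ) + 1) (by simp; omega)
      simpa [List.get_cons_succ, Nat.mod_eq_of_lt hi] using h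
    · have hieq : (i : ℕ) = l.length - 1 := by have := i.2; omega
      have hmod : ((i : ℕ) + 1) % l.length = 0 := by
        rw [hieq, Nat.sub_add_cancel (by omega), Nat.mod_self]
      have hxv : l.get i = v := by
        rw [← hlast, List.getLast_eq_getElem hne]
        simp only [List.get_eq_getElem]
        congr 1
      have h := hchain 0 (by simp; omega)
      simp only [List.getElem_cons_succ] at h
      have h0 : (v :: l)[0] = v := rfl
      rw [h0] at h
      rw [hxv]
      convert h using 2
      simp only [List.get_eq_getElem, hmod]
  · -- unique preimage
    intro w
    exact ⟨l.formPerm.symm w, l.formPerm.apply_symm_apply w,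
      fun y hy => by simpa using congrArg l.formPerm.symm hy⟩
  · -- closed sets
    intro X ⟨x, hx⟩ hX
    have hcyc : (l.formPerm).IsCycle := List.isCycle_formPerm hnodup hn2
    have hiter : ∀ (n : ℕ) (z : V), z ∈ X → (l.formPerm ^ n) z ∈ X := by
      intro n
      induction n with
      | zero => intro z hz; simpa using hz
      | succ n ih =>
        intro z hz
        have : (l.formPerm ^ (n + 1)) z = (l.formPerm ^ n) (l.formPerm z) := by
          rw [pow_succ]; rfl
        rw [this]
        exact ih _ (hX z hz)
    ext y
    simp only [Set.mem_univ, iff_true]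
    have hxne : l.formPerm x ≠ x :=
      (List.formPerm_apply_mem_ne_self_iff l hnodup x (hmem x)).mpr hn2
    have hyne : l.formPerm y ≠ y :=
      (List.formPerm_apply_mem_ne_self_iff l hnodup y (hmem y)).mpr hn2
    obtain ⟨n, hn⟩ := hcyc.exists_pow_eq hxne hyne
    rw [← hn]
    exact hiter n x hx
end
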